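/- If f ∈ C^1(𝕋^N), then for every t ≥ 0 one has ∫_{𝕋^N} |f − P_t f| dm^N ≤ √t · Σ_{n=1}^N ∫_{𝕋^N} |∂_n f| dm^N. -/

import Mathlib

open MeasureTheory

noncomputable section

/-- The Haar probability measure on the torus `𝕋^N = (ℝ/ℤ)^N`, realized as Lebesgue measure
restricted to the fundamental domain `[0,1)^N`; functions on `𝕋^N` are realized as
`ℤ^N`-periodic functions on `ℝ^N`. -/
def torusMeasure (N : ℕ) : Measure (Fin N → ℝ) :=
  (volume : Measure (Fin N → ℝ)).restrict (Set.univ.pi fun _ => Set.Ico (0:ℝ) 1)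

/-- `f : ℝ^N → ℝ` is `ℤ^N`-periodic, i.e. it descends to a function on `𝕋^N`. -/
def ZPeriodic {N : ℕ} (f : (Fin N → ℝ) → ℝ) : Prop :=
  ∀ (x : Fin N → ℝ) (k : Fin N → ℤ), f (x + fun n => (k n : ℝ)) = f x

/-- The partial derivative `∂ₙ f`. -/
def torusPDeriv {N : ℕ} (n : Fin N) (f : (Fin N → ℝ) → ℝ) (x : Fin N → ℝ) : ℝ :=
  fderiv ℝ f x (Pi.single n 1)

/-- `E_S f`: the conditional expectation of `f` obtained by integrating out the coordinates
outside `S` (with respect to the Haar probability measure on the torus). -/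
def torusCondExp {N : ℕ} (S : Finset (Fin N)) (f : (Fin N → ℝ) → ℝ)
    (x : Fin N → ℝ) : ℝ :=
  ∫ y, f (fun n => if n ∈ S then x n else y n) ∂(torusMeasure N)

/-- The heat semigroup `P_t f (x) = ∫_{ℝ^N} f(x + y) dγ_t^{⊗N}(y)`, where `γ_t` is the centered
Gaussian measure on `ℝ` with variance `t` (for `t = 0` this is `f` itself, since `γ_0 = δ_0`). -/
def heatSemigroup {N : ℕ} (t : ℝ) (f : (Fin N → ℝ) → ℝ) (x : Fin N → ℝ) : ℝ :=
  ∫ y, f (x + y) ∂(Measure.pi fun _ : Fin N => ProbabilityTheory.gaussianReal 0 (Real.toNNReal t))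

open ProbabilityTheory Real Set Function

variable {N : ℕ}

lemma aux_integrable_of_bdd {α : Type*} [MeasurableSpace α] {μ : Measure α} [IsFiniteMeasure μ]
    {h : α → ℝ} (hm : AEStronglyMeasurable h μ) {C : ℝ} (hC : ∀ x, |h x| ≤ C) :
    Integrable h μ :=
  (integrable_const C).mono' hm (Filter.Eventually.of_forall fun x => by
    simpa [Real.norm_eq_abs] using hC x)

instance torusMeasure_prob : IsProbabilityMeasure (torusMeasure N) := by
  constructor
  rw [torusMeasure, Measure.restrict_apply_univ, volume_pi_pi]
  simp

lemma torus_coords {l : Fin N → ℝ}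
    (hl : l ∈ Submodule.span ℤ (Set.range (Pi.basisFun ℝ (Fin N)))) :
    ∃ k : Fin N → ℤ, l = fun n => (k n : ℝ) := by
  have h := fun i => ((Pi.basisFun ℝ (Fin N)).mem_span_iff_repr_mem ℤ l).mp hl i
  choose k hk using h
  refine ⟨k, funext fun i => ?_⟩
  have := hk i
  simpa [Pi.basisFun_repr, eq_comm] using this.symm

lemma torus_integral_translate {g : (Fin N → ℝ) → ℝ} (hg : ZPeriodic g) (y : Fin N → ℝ) :
    ∫ x, g (x + y) ∂(torusMeasure N) = ∫ x, g x ∂(torusMeasure N) := by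
  classical
  set L := (Submodule.span ℤ (Set.range (Pi.basisFun ℝ (Fin N)))).toAddSubgroup with hL
  haveI : Countable L := by
    change Countable (Submodule.span ℤ (Set.range (Pi.basisFun ℝ (Fin N))))
    infer_instance
  set D : Set (Fin N → ℝ) := Set.univ.pi fun _ : Fin N => Set.Ico (0:ℝ) 1 with hDdef
  have hD : IsAddFundamentalDomain L D volume := by
    have := ZSpan.isAddFundamentalDomain' (Pi.basisFun ℝ (Fin N)) (volume : Measure (Fin N → ℝ))
    rwa [ZSpan.fundamentalDomain_pi_basisFun] at this
  have hvadd : ∀ (l : L) (x : Fin N → ℝ), l +ᵥ x = ↑l + x := fun _ _ => rfl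
  have hinv : ∀ (l : L) (x : Fin N → ℝ), g (l +ᵥ x) = g x := by
    rintro ⟨l, hl⟩ x
    obtain ⟨k, hk⟩ := torus_coords hl
    rw [hvadd]
    show g (l + x) = g x
    rw [hk, add_comm]
    exact hg x k
  have hD' : IsAddFundamentalDomain L ((fun x => x + y) '' D) volume := by
    refine hD.image_of_equiv (Equiv.addRight y) ?_ (Equiv.refl L) ?_
    · exact (measurePreserving_add_right volume (-y)).quasiMeasurePreserving
    · intro l x
      show ((l +ᵥ x) + y) = l +ᵥ (x + y)
      rw [hvadd, hvadd, add_assoc]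
  have hsub : ∫ x in D, g (x + y) ∂volume = ∫ x in (fun x => x + y) '' D, g x ∂volume := by
    rw [(measurePreserving_add_right volume y).setIntegral_image_emb
      (measurableEmbedding_addRight y) g D]
  rw [torusMeasure]
  show ∫ x in D, g (x + y) ∂volume = ∫ x in D, g x ∂volume
  rw [hsub]
  exact hD'.setIntegral_eq hD hinv

lemma zperiodic_abs {g : (Fin N → ℝ) → ℝ} (hg : ZPeriodic g) : ZPeriodic fun x => |g x| := by
  intro x k; simp [hg x k]

lemma zperiodic_bound {g : (Fin N → ℝ) → ℝ} (hc : Continuous g) (hg : ZPeriodic g) :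
    ∃ C, 0 ≤ C ∧ ∀ x, |g x| ≤ C := by
  obtain ⟨C, hC⟩ := (isCompact_Icc (a := (0 : Fin N → ℝ)) (b := 1)).exists_bound_of_continuousOn
    hc.continuousOn
  refine ⟨C, le_trans (norm_nonneg (g 0)) (hC 0 (by simp [Set.mem_Icc, Pi.le_def, zero_le_one])), fun x => ?_⟩
  have hx : (fun n => Int.fract (x n)) ∈ Set.Icc (0 : Fin N → ℝ) 1 := by
    constructor
    · intro n; exact Int.fract_nonneg _
    · intro n; exact (Int.fract_lt_one _).le
  have hgx : g x = g fun n => Int.fract (x n) := by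
    have hx' : x = (fun n => Int.fract (x n)) + fun n => ((⌊x n⌋ : ℤ) : ℝ) := by
      funext n
      exact (Int.fract_add_floor (x n)).symm
    conv_lhs => rw [hx']
    exact hg _ _
  rw [hgx]
  simpa [Real.norm_eq_abs] using hC _ hx

lemma zperiodic_pderiv {f : (Fin N → ℝ) → ℝ} (hf : Differentiable ℝ f) (hp : ZPeriodic f)
    (n : Fin N) : ZPeriodic (torusPDeriv n f) := by
  intro x k
  have hfe : (fun z : Fin N → ℝ => f (z + fun m => (k m : ℝ))) = f := funext fun z => hp z k
  have h1 : HasFDerivAt (fun z : Fin N → ℝ => f (z + fun m => (k m : ℝ)))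
      (fderiv ℝ f (x + fun m => (k m : ℝ))) x := by
    have h2 : HasFDerivAt f (fderiv ℝ f (x + fun m => (k m : ℝ))) (x + fun m => (k m : ℝ)) :=
      (hf _).hasFDerivAt
    have h3 : HasFDerivAt (fun z : Fin N → ℝ => z + fun m => (k m : ℝ))
        (ContinuousLinearMap.id ℝ (Fin N → ℝ)) x := (hasFDerivAt_id x).add_const _
    simpa [Function.comp_def] using h2.comp x h3
  rw [hfe] at h1
  rw [torusPDeriv, torusPDeriv, ← h1.fderiv]

lemma continuous_pderiv {f : (Fin N → ℝ) → ℝ} (hf : ContDiff ℝ 1 f) (n : Fin N) :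
    Continuous (torusPDeriv n f) :=
  (hf.continuous_fderiv one_ne_zero).clm_apply continuous_const

lemma ftc_bound {f : (Fin N → ℝ) → ℝ} (hf : ContDiff ℝ 1 f) (x y : Fin N → ℝ) :
    |f (x + y) - f x| ≤
      ∫ s in Set.Ioc (0:ℝ) 1, ∑ n, |y n| * |torusPDeriv n f (x + s • y)| := by
  have hdiff : Differentiable ℝ f := hf.differentiable one_ne_zero
  have hcurve : ∀ s : ℝ, HasDerivAt (fun s : ℝ => f (x + s • y))
      ((fderiv ℝ f (x + s • y)) y) s := by
    intro s
    have h1 : HasDerivAt (fun s : ℝ => x + s • y) y s := by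
      simpa using ((hasDerivAt_id s).smul_const y).const_add x
    exact ((hdiff _).hasFDerivAt).comp_hasDerivAt s h1
  have hcont : Continuous fun s : ℝ => (fderiv ℝ f (x + s • y)) y :=
    ((hf.continuous_fderiv one_ne_zero).comp
      (continuous_const.add (continuous_id.smul continuous_const))).clm_apply continuous_const
  have heq : f (x + y) - f x = ∫ s in (0:ℝ)..1, (fderiv ℝ f (x + s • y)) y := by
    rw [intervalIntegral.integral_eq_sub_of_hasDerivAt (fun s _ => hcurve s)
      (hcont.intervalIntegrable 0 1)]
    simp
  have hptw : ∀ s : ℝ, |(fderiv ℝ f (x + s • y)) y| ≤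
      ∑ n, |y n| * |torusPDeriv n f (x + s • y)| := by
    intro s
    set L := fderiv ℝ f (x + s • y)
    have hy : L y = ∑ n, y n • L (Pi.single n 1) := by
      conv_lhs => rw [← Finset.univ_sum_single y]
      rw [map_sum]
      congr 1
      funext n
      have hs : (Pi.single n (y n) : Fin N → ℝ) = y n • (Pi.single n 1 : Fin N → ℝ) := by
        rw [← Pi.single_smul, smul_eq_mul, mul_one]
      rw [hs]; exact L.map_smul _ _
    rw [hy]
    refine (Finset.abs_sum_le_sum_abs _ _).trans ?_
    apply Finset.sum_le_sum
    intro n _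
    rw [smul_eq_mul, abs_mul]
    exact le_rfl
  rw [heq, ← intervalIntegral.integral_of_le (by norm_num : (0:ℝ) ≤ 1)]
  calc |∫ s in (0:ℝ)..1, (fderiv ℝ f (x + s • y)) y|
      ≤ ∫ s in (0:ℝ)..1, |(fderiv ℝ f (x + s • y)) y| := by
        exact intervalIntegral.abs_integral_le_integral_abs (by norm_num)
    _ ≤ ∫ s in (0:ℝ)..1, ∑ n, |y n| * |torusPDeriv n f (x + s • y)| := by
        apply intervalIntegral.integral_mono_on (by norm_num)
        · exact hcont.abs.intervalIntegrable 0 1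
        · exact (continuous_finset_sum _ fun n _ => continuous_const.mul
            (((continuous_pderiv hf n).comp
              (continuous_const.add (continuous_id.smul continuous_const))).abs)).intervalIntegrable 0 1
        · intro s _; exact hptw s

lemma gauss_Ioi {b : ℝ} (hb : 0 < b) :
    ∫ x in Set.Ioi (0:ℝ), x * rexp (-b * x ^ 2) = (2 * b)⁻¹ := by
  have hb' : b ≠ 0 := hb.ne'
  have A : ∀ x : ℝ, HasDerivAt (fun x : ℝ => -(2 * b)⁻¹ * rexp (-b * x ^ 2))
      (x * rexp (-b * x ^ 2)) x := by
    intro x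
    convert (((hasDerivAt_pow 2 x).const_mul (-b)).exp.const_mul (-(2 * b)⁻¹)) using 1
    · rfl
    · rfl
    field_simp
    ring
  have B : Filter.Tendsto (fun y : ℝ => -(2 * b)⁻¹ * rexp (-b * y ^ 2))
      Filter.atTop (nhds (-(2 * b)⁻¹ * 0)) := by
    refine Filter.Tendsto.const_mul _ ?_
    exact Real.tendsto_exp_atBot.comp
      ((Filter.tendsto_pow_atTop two_ne_zero).const_mul_atTop_of_neg (neg_lt_zero.2 hb))
  have := MeasureTheory.integral_Ioi_of_hasDerivAt_of_tendsto' (a := (0:ℝ)) (fun x _ => A x)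
    (integrable_mul_exp_neg_mul_sq hb).integrableOn B
  rw [this]
  norm_num

lemma integrable_abs_mul_exp {b : ℝ} (hb : 0 < b) :
    Integrable (fun u : ℝ => |u| * rexp (-b * u ^ 2)) := by
  have : (fun u : ℝ => |u| * rexp (-b * u ^ 2)) =
      fun u : ℝ => ‖u * rexp (-b * u ^ 2)‖ := by
    funext u
    rw [Real.norm_eq_abs, abs_mul, abs_of_pos (Real.exp_pos _)]
  rw [this]
  exact (integrable_mul_exp_neg_mul_sq hb).norm

lemma integral_abs_mul_exp {b : ℝ} (hb : 0 < b) :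
    ∫ u : ℝ, |u| * rexp (-b * u ^ 2) = b⁻¹ := by
  have h := integral_comp_abs (f := fun x : ℝ => x * rexp (-b * x ^ 2))
  have h2 : (fun u : ℝ => |u| * rexp (-b * u ^ 2)) =
      fun u : ℝ => |u| * rexp (-b * |u| ^ 2) := by
    funext u; rw [sq_abs]
  rw [h2]
  rw [h, gauss_Ioi hb]
  rw [mul_inv]
  ring

lemma gauss_abs_moment {t : ℝ} (ht : 0 ≤ t) :
    Integrable (fun u : ℝ => |u|) (gaussianReal 0 t.toNNReal) ∧
      ∫ u, |u| ∂(gaussianReal 0 t.toNNReal) ≤ Real.sqrt t := by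
  by_cases h0 : t.toNNReal = 0
  · rw [h0, gaussianReal_zero_var]
    constructor
    · exact (integrable_const |(0:ℝ)|).congr (MeasureTheory.ae_eq_dirac fun u : ℝ => |u|).symm
    · rw [integral_dirac]
      simpa using Real.sqrt_nonneg t
  · have htpos : 0 < t := by
      rcases lt_or_eq_of_le ht with h | h
      · exact h
      · exfalso; exact h0 (by simp [← h])
    have hvt : (t.toNNReal : ℝ) = t := Real.coe_toNNReal t ht
    set v := t.toNNReal with hv
    set b : ℝ := (2 * t)⁻¹ with hbdef
    have hb : 0 < b := by positivity
    have hpdf : ∀ u : ℝ, gaussianPDFReal 0 v u = (Real.sqrt (2 * π * t))⁻¹ * rexp (-b * u ^ 2) := by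
      intro u
      rw [gaussianPDFReal]
      rw [hvt]
      congr 1
      rw [hbdef]
      ring_nf
    have hmeas : Measurable fun u : ℝ => (gaussianPDFReal 0 v u).toNNReal :=
      (measurable_gaussianPDFReal 0 v).real_toNNReal
    have hwd : gaussianReal 0 v = volume.withDensity fun u => ((gaussianPDFReal 0 v u).toNNReal : ENNReal) := by
      rw [gaussianReal_of_var_ne_zero 0 h0]
      rfl
    have hint2 : Integrable (fun u : ℝ => gaussianPDFReal 0 v u * |u|) := by
      have : (fun u : ℝ => gaussianPDFReal 0 v u * |u|) =
          fun u : ℝ => (Real.sqrt (2 * π * t))⁻¹ * (|u| * rexp (-b * u ^ 2)) := by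
        funext u; rw [hpdf u]; ring
      rw [this]
      exact (integrable_abs_mul_exp hb).const_mul _
    have hint : Integrable (fun u : ℝ => |u|) (gaussianReal 0 v) := by
      rw [hwd, integrable_withDensity_iff_integrable_smul hmeas]
      refine hint2.congr (Filter.Eventually.of_forall fun u => ?_)
      show gaussianPDFReal 0 v u * |u| = (gaussianPDFReal 0 v u).toNNReal • |u|
      rw [NNReal.smul_def, smul_eq_mul, Real.coe_toNNReal _ (gaussianPDFReal_nonneg 0 v u)]
    refine ⟨hint, ?_⟩
    have hval : ∫ u, |u| ∂(gaussianReal 0 v) = ∫ u : ℝ, gaussianPDFReal 0 v u * |u| := by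
      rw [hwd, integral_withDensity_eq_integral_smul hmeas]
      refine integral_congr_ae (Filter.Eventually.of_forall fun u => ?_)
      show (gaussianPDFReal 0 v u).toNNReal • |u| = gaussianPDFReal 0 v u * |u|
      rw [NNReal.smul_def, smul_eq_mul, Real.coe_toNNReal _ (gaussianPDFReal_nonneg 0 v u)]
    rw [hval]
    have : ∫ u : ℝ, gaussianPDFReal 0 v u * |u| =
        (Real.sqrt (2 * π * t))⁻¹ * (2 * t) := by
      have heq : (fun u : ℝ => gaussianPDFReal 0 v u * |u|) =
          fun u : ℝ => (Real.sqrt (2 * π * t))⁻¹ * (|u| * rexp (-b * u ^ 2)) := by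
        funext u; rw [hpdf u]; ring
      rw [heq, integral_const_mul, integral_abs_mul_exp hb, hbdef, inv_inv]
    rw [this]
    -- (√(2πt))⁻¹ * (2t) ≤ √t
    have hsq : 0 < Real.sqrt (2 * π * t) := Real.sqrt_pos.mpr (by positivity)
    rw [inv_mul_le_iff₀ hsq]
    have hfac : Real.sqrt (2 * π * t) * Real.sqrt t = Real.sqrt (2 * π) * t := by
      rw [← Real.sqrt_mul (by positivity : (0:ℝ) ≤ 2 * π * t) t,
        show 2 * π * t * t = (2 * π) * (t * t) by ring,
        Real.sqrt_mul (by positivity : (0:ℝ) ≤ 2 * π), Real.sqrt_mul_self ht]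
    rw [hfac]
    have h2 : (2:ℝ) ≤ Real.sqrt (2 * π) := by
      have h4 : (4:ℝ) ≤ 2 * π := by nlinarith [Real.pi_gt_three]
      calc (2:ℝ) = Real.sqrt 4 := by
            rw [show (4:ℝ) = 2 ^ 2 by norm_num, Real.sqrt_sq (by norm_num)]
        _ ≤ Real.sqrt (2 * π) := Real.sqrt_le_sqrt h4
    nlinarith [h2, ht]

lemma pi_map_eval (μ : Measure ℝ) [IsProbabilityMeasure μ] (n : Fin N) :
    (Measure.pi fun _ : Fin N => μ).map (Function.eval n) = μ := by
  classical
  ext s hs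
  rw [Measure.map_apply (measurable_pi_apply n) hs, Set.eval_preimage, Measure.pi_pi]
  rw [Finset.prod_eq_single n (fun m _ hm => by simp [Function.update_of_ne hm])
    (fun h => absurd (Finset.mem_univ n) h)]
  simp

lemma integral_eval_abs (μ : Measure ℝ) [IsProbabilityMeasure μ] (n : Fin N)
    (hint : Integrable (fun u : ℝ => |u|) μ) :
    Integrable (fun y : Fin N → ℝ => |y n|) (Measure.pi fun _ : Fin N => μ) ∧
    ∫ y : Fin N → ℝ, |y n| ∂(Measure.pi fun _ : Fin N => μ) = ∫ u, |u| ∂μ := by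
  have hmap := pi_map_eval (N := N) μ n
  constructor
  · rw [← hmap] at hint
    exact hint.comp_measurable (measurable_pi_apply n)
  · conv_rhs => rw [← hmap]
    rw [integral_map (measurable_pi_apply n).aemeasurable
      (continuous_abs.aestronglyMeasurable
        (μ := (Measure.pi fun _ : Fin N => μ).map (Function.eval n)))]

/-- **Lemma 5.** If `f ∈ C¹(𝕋^N)`, then `‖f - P_t f‖₁ ≤ √t · ‖∂⃗f‖_{L₁ℓ₁^N}` for all `t ≥ 0`. -/
theorem stmt6 (N : ℕ) (f : (Fin N → ℝ) → ℝ) (hf : ContDiff ℝ 1 f) (hper : ZPeriodic f)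
    (t : ℝ) (ht : 0 ≤ t) :
    (∫ x, |f x - heatSemigroup t f x| ∂(torusMeasure N)) ≤
      Real.sqrt t * ∑ n, ∫ x, |torusPDeriv n f x| ∂(torusMeasure N) := by
  classical
  have habs2 : ∀ a b : ℝ, |a - b| ≤ |a| + |b| := fun a b => by
    simpa [sub_eq_add_neg] using abs_add_le a (-b)
  set μ := torusMeasure N with hμ
  set γ := gaussianReal 0 t.toNNReal with hγ
  set γN := Measure.pi fun _ : Fin N => γ with hγN
  have hfc : Continuous f := hf.continuous
  obtain ⟨Cf, hCf0, hCf⟩ := zperiodic_bound hfc hper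
  have hDcont : ∀ n, Continuous (torusPDeriv n f) := continuous_pderiv hf
  have hDper : ∀ n, ZPeriodic (torusPDeriv n f) :=
    fun n => zperiodic_pderiv (hf.differentiable one_ne_zero) hper n
  choose CD hCD0 hCD using fun n => zperiodic_bound (hDcont n) (hDper n)
  set I : Fin N → ℝ := fun n => ∫ x, |torusPDeriv n f x| ∂μ with hI
  have hI0 : ∀ n, 0 ≤ I n := fun n => integral_nonneg fun x => abs_nonneg _
  obtain ⟨hgabs_int, hgabs⟩ := gauss_abs_moment ht
  have hPtb : ∀ x, |heatSemigroup t f x| ≤ Cf := by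
    intro x
    have h := norm_integral_le_of_norm_le_const (μ := γN)
      (f := fun y => f (x + y)) (C := Cf) (Filter.Eventually.of_forall fun y => by
        simpa [Real.norm_eq_abs] using hCf (x + y))
    simpa [heatSemigroup, Real.norm_eq_abs, measure_univ] using h
  have hpt : ∀ x, |f x - heatSemigroup t f x| ≤ ∫ y, |f (x + y) - f x| ∂γN := by
    intro x
    have hint : Integrable (fun y => f (x + y)) γN :=
      aux_integrable_of_bdd ((hfc.comp (continuous_const.add continuous_id)).aestronglyMeasurable)
        (fun y => hCf _)
    have h1 : f x - heatSemigroup t f x = ∫ y, (f x - f (x + y)) ∂γN := by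
      rw [integral_sub (integrable_const (f x)) hint, integral_const, probReal_univ,
        one_smul]
      rfl
    rw [h1]
    have h2 := norm_integral_le_integral_norm (μ := γN) (f := fun y => f x - f (x + y))
    simp only [Real.norm_eq_abs] at h2
    refine h2.trans (le_of_eq (integral_congr_ae (Filter.Eventually.of_forall fun y => ?_)))
    exact abs_sub_comm _ _
  have hPtm : AEStronglyMeasurable (fun x => heatSemigroup t f x) μ := by
    have hc : StronglyMeasurable fun p : (Fin N → ℝ) × (Fin N → ℝ) => f (p.1 + p.2) :=
      (hfc.comp (continuous_fst.add continuous_snd)).stronglyMeasurable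
    exact (hc.integral_prod_right').aestronglyMeasurable
  have hLHSint : Integrable (fun x => |f x - heatSemigroup t f x|) μ :=
    aux_integrable_of_bdd ((hfc.aestronglyMeasurable.sub hPtm).norm)
      (C := Cf + Cf) (fun x => by
        rw [abs_abs]
        exact (habs2 _ _).trans (add_le_add (hCf x) (hPtb x)))
  set G : ((Fin N → ℝ) × (Fin N → ℝ)) → ℝ := fun p => |f (p.1 + p.2) - f p.1| with hG
  have hGcont : Continuous G := ((hfc.comp (continuous_fst.add continuous_snd)).sub
    (hfc.comp continuous_fst)).abs
  have hGb : ∀ p, |G p| ≤ Cf + Cf := fun p => by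
    rw [hG]; dsimp only; rw [abs_abs]
    exact (habs2 _ _).trans (add_le_add (hCf _) (hCf _))
  have hGint : Integrable G (μ.prod γN) :=
    aux_integrable_of_bdd hGcont.aestronglyMeasurable hGb
  have step2 : ∫ x, |f x - heatSemigroup t f x| ∂μ ≤ ∫ x, (∫ y, G (x, y) ∂γN) ∂μ :=
    integral_mono hLHSint hGint.integral_prod_left (fun x => hpt x)
  have step4 : ∀ y, ∫ x, G (x, y) ∂μ ≤ ∑ n, |y n| * I n := by
    intro y
    set ν := (volume : Measure ℝ).restrict (Set.Ioc (0:ℝ) 1) with hν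
    haveI : IsProbabilityMeasure ν := by
      constructor
      rw [hν, Measure.restrict_apply_univ, Real.volume_Ioc]
      norm_num
    set H : ((Fin N → ℝ) × ℝ) → ℝ :=
      fun q => ∑ n, |y n| * |torusPDeriv n f (q.1 + q.2 • y)| with hH
    have hHcont : Continuous H := continuous_finset_sum _ fun n _ =>
      continuous_const.mul (((hDcont n).comp
        (continuous_fst.add (continuous_snd.smul continuous_const))).abs)
    have hHb : ∀ q, |H q| ≤ ∑ n, |y n| * CD n := by
      intro q
      rw [hH]; dsimp only
      refine (Finset.abs_sum_le_sum_abs _ _).trans (Finset.sum_le_sum fun n _ => ?_)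
      rw [abs_mul, abs_abs, abs_abs]
      exact mul_le_mul_of_nonneg_left (hCD n _) (abs_nonneg _)
    have hHint : Integrable H (μ.prod ν) := aux_integrable_of_bdd hHcont.aestronglyMeasurable hHb
    have hGyint : Integrable (fun x => G (x, y)) μ :=
      aux_integrable_of_bdd
        ((hGcont.comp (continuous_id.prodMk continuous_const)).aestronglyMeasurable)
        (fun x => hGb (x, y))
    have hmono1 : ∫ x, G (x, y) ∂μ ≤ ∫ x, (∫ s, H (x, s) ∂ν) ∂μ :=
      integral_mono hGyint hHint.integral_prod_left (fun x => ftc_bound hf x y)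
    have hswapH : ∫ x, (∫ s, H (x, s) ∂ν) ∂μ = ∫ s, (∫ x, H (x, s) ∂μ) ∂ν :=
      integral_integral_swap (f := fun x s => H (x, s)) hHint
    have hinner : ∀ s : ℝ, ∫ x, H (x, s) ∂μ = ∑ n, |y n| * I n := by
      intro s
      have hterm : ∀ n : Fin N, Integrable (fun x => |y n| * |torusPDeriv n f (x + s • y)|) μ :=
        fun n => aux_integrable_of_bdd
          ((continuous_const.mul (((hDcont n).comp
            (continuous_id.add continuous_const)).abs)).aestronglyMeasurable)
          (C := |y n| * CD n) (fun x => by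
            rw [abs_mul, abs_abs, abs_abs]
            exact mul_le_mul_of_nonneg_left (hCD n _) (abs_nonneg _))
      have : ∫ x, H (x, s) ∂μ = ∑ n, ∫ x, |y n| * |torusPDeriv n f (x + s • y)| ∂μ :=
        integral_finset_sum _ (fun n _ => hterm n)
      rw [this]
      refine Finset.sum_congr rfl fun n _ => ?_
      rw [integral_const_mul]
      congr 1
      exact torus_integral_translate (zperiodic_abs (hDper n)) (s • y)
    have hlast : ∫ s, (∫ x, H (x, s) ∂μ) ∂ν = ∑ n, |y n| * I n := by
      rw [integral_congr_ae (Filter.Eventually.of_forall hinner), integral_const,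
        probReal_univ, one_smul]
    calc ∫ x, G (x, y) ∂μ ≤ ∫ x, (∫ s, H (x, s) ∂ν) ∂μ := hmono1
      _ = ∫ s, (∫ x, H (x, s) ∂μ) ∂ν := hswapH
      _ = ∑ n, |y n| * I n := hlast
  have hyint := fun n : Fin N => integral_eval_abs (N := N) γ n hgabs_int
  have hsum_int : Integrable (fun y : Fin N → ℝ => ∑ n, |y n| * I n) γN :=
    integrable_finset_sum _ fun n _ => ((hyint n).1.mul_const (I n))
  have step5 : ∫ y, (∫ x, G (x, y) ∂μ) ∂γN ≤ ∫ y, (∑ n, |y n| * I n) ∂γN :=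
    integral_mono hGint.integral_prod_right hsum_int step4
  have hval : ∫ y, (∑ n, |y n| * I n) ∂γN = ∑ n, (∫ u, |u| ∂γ) * I n := by
    rw [integral_finset_sum _ (fun n _ => (hyint n).1.mul_const (I n))]
    refine Finset.sum_congr rfl fun n _ => ?_
    rw [integral_mul_const, (hyint n).2]
  have hfinal : ∑ n, (∫ u, |u| ∂γ) * I n ≤ Real.sqrt t * ∑ n, I n := by
    rw [Finset.mul_sum]
    refine Finset.sum_le_sum fun n _ => mul_le_mul_of_nonneg_right hgabs (hI0 n)
  calc ∫ x, |f x - heatSemigroup t f x| ∂μ ≤ ∫ x, (∫ y, G (x, y) ∂γN) ∂μ := step2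
    _ = ∫ y, (∫ x, G (x, y) ∂μ) ∂γN := integral_integral_swap (f := fun x y => G (x, y)) hGint
    _ ≤ ∫ y, (∑ n, |y n| * I n) ∂γN := step5
    _ = ∑ n, (∫ u, |u| ∂γ) * I n := hval
    _ ≤ Real.sqrt t * ∑ n, I n := hfinal
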